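/- The fractional s-perimeter is strictly subadditive on disjoint sets of positive measure: if E and F are measurable subsets of ℝ^N with |E ∩ F| = 0, |E| > 0, |F| > 0, and Per_s(E), Per_s(F) < ∞, then Per_s(E ∪ F) < Per_s(E) + Per_s(F). -/

import Mathlib

open MeasureTheory
open scoped ENNReal

/-- The fractional `s`-perimeter of a measurable set `E ⊆ ℝ^N`. -/
noncomputable def fracPerimeter (N : ℕ) (s : ℝ) (E : Set (EuclideanSpace ℝ (Fin N))) : ℝ≥0∞ :=
  ∫⁻ x in E, ∫⁻ y in Eᶜ, ENNReal.ofReal (‖x - y‖ ^ (-((N : ℝ) + s)))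

private lemma fracKernel_measurable (N : ℕ) (s : ℝ) :
    Measurable (fun p : (EuclideanSpace ℝ (Fin N)) × (EuclideanSpace ℝ (Fin N)) =>
      ENNReal.ofReal (‖p.1 - p.2‖ ^ (-((N : ℝ) + s)))) := by fun_prop

private lemma fracPerimeter_congr_ae {N : ℕ} {s : ℝ}
    {A A' : Set (EuclideanSpace ℝ (Fin N))} (h : A =ᵐ[volume] A') :
    fracPerimeter N s A = fracPerimeter N s A' := by
  unfold fracPerimeter
  rw [Measure.restrict_congr_set h]
  exact lintegral_congr fun x => by rw [Measure.restrict_congr_set h.compl]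

/-- The fractional perimeter is strictly subadditive on disjoint sets of positive
measure. -/
theorem fracPerimeter_strict_subadditive {N : ℕ} {s : ℝ} (hs : s ∈ Set.Ioo (0 : ℝ) 1)
    (E F : Set (EuclideanSpace ℝ (Fin N)))
    (hE : MeasurableSet E) (hF : MeasurableSet F)
    (hdisj : volume (E ∩ F) = 0) (hEpos : 0 < volume E) (hFpos : 0 < volume F)
    (hEfin : fracPerimeter N s E < ⊤) (hFfin : fracPerimeter N s F < ⊤) :
    fracPerimeter N s (E ∪ F) < fracPerimeter N s E + fracPerimeter N s F := by
  -- dimension must be positive, else hypotheses are contradictory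
  rcases Nat.eq_zero_or_pos N with hN | hN
  · subst hN
    exfalso
    haveI : Subsingleton (EuclideanSpace ℝ (Fin 0)) := by
      constructor; intro a b; ext i; exact absurd i.2 (Nat.not_lt_zero _)
    obtain ⟨x, hx⟩ := nonempty_of_measure_ne_zero hEpos.ne'
    obtain ⟨y, hy⟩ := nonempty_of_measure_ne_zero hFpos.ne'
    have : E ⊆ E ∩ F := fun z hz => ⟨hz, by rwa [Subsingleton.elim z y]⟩
    exact hEpos.ne' (le_antisymm (le_trans (measure_mono this) hdisj.le) zero_le)
  haveI : Nonempty (Fin N) := ⟨⟨0, hN⟩⟩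
  haveI : NullSingletonClass (volume : Measure (EuclideanSpace ℝ (Fin N))) := inferInstance
  -- replace F by F \ E, which is a.e. equal and genuinely disjoint from E
  have hFae : F =ᵐ[volume] (F \ E : Set (EuclideanSpace ℝ (Fin N))) := by
    refine (MeasureTheory.ae_eq_set.mpr ⟨?_, ?_⟩)
    · rw [Set.diff_diff_right_self]
      simpa [Set.inter_comm] using hdisj
    · simp
  set K : EuclideanSpace ℝ (Fin N) → EuclideanSpace ℝ (Fin N) → ℝ≥0∞ :=
    fun x y => ENNReal.ofReal (‖x - y‖ ^ (-((N : ℝ) + s))) with hK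
  have hKmeas := fracKernel_measurable N s
  -- work with F' := F \ E
  set F' : Set (EuclideanSpace ℝ (Fin N)) := F \ E with hF'def
  have hF' : MeasurableSet F' := hF.diff hE
  have hF'pos : 0 < volume F' := by rwa [← measure_congr hFae]
  have hF'fin : fracPerimeter N s F' < ⊤ := by rwa [← fracPerimeter_congr_ae hFae]
  have hdisj' : Disjoint E F' := Set.disjoint_left.mpr fun x hx hx' => hx'.2 hx
  have hUnion : fracPerimeter N s (E ∪ F) = fracPerimeter N s (E ∪ F') := by
    refine fracPerimeter_congr_ae ?_
    exact (Filter.EventuallyEq.refl _ _).union hFae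
  rw [hUnion, fracPerimeter_congr_ae hFae]
  set G : Set (EuclideanSpace ℝ (Fin N)) := E ∪ F' with hGdef
  -- measurable inner integrals
  have hmeasG : Measurable fun x => ∫⁻ y in Gᶜ, K x y :=
    Measurable.lintegral_prod_right' (f := fun p => K p.1 p.2) hKmeas
  have hmeasE : Measurable fun x => ∫⁻ y in E, K x y :=
    Measurable.lintegral_prod_right' (f := fun p => K p.1 p.2) hKmeas
  have hmeasF : Measurable fun x => ∫⁻ y in F', K x y :=
    Measurable.lintegral_prod_right' (f := fun p => K p.1 p.2) hKmeas
  -- inner decompositions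
  have hinnE : ∀ x, (∫⁻ y in Eᶜ, K x y) = (∫⁻ y in Gᶜ, K x y) + ∫⁻ y in F', K x y := by
    intro x
    have hset : Eᶜ = Gᶜ ∪ F' := by
      rw [hGdef, Set.compl_union]
      ext z
      simp only [Set.mem_compl_iff, Set.mem_union, Set.mem_inter_iff]
      constructor
      · intro hz; by_cases hzF : z ∈ F' <;> tauto
      · rintro (⟨h1, _⟩ | h1)
        · exact h1
        · exact fun hzE => hdisj'.le_bot ⟨hzE, h1⟩
    rw [hset, lintegral_union hF' (by
      refine Set.disjoint_left.mpr fun z hz hz' => ?_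
      exact hz (Set.mem_union_right _ hz'))]
  have hinnF : ∀ x, (∫⁻ y in F'ᶜ, K x y) = (∫⁻ y in Gᶜ, K x y) + ∫⁻ y in E, K x y := by
    intro x
    have hset : F'ᶜ = Gᶜ ∪ E := by
      rw [hGdef, Set.compl_union]
      ext z
      simp only [Set.mem_compl_iff, Set.mem_union, Set.mem_inter_iff]
      constructor
      · intro hz; by_cases hzE : z ∈ E <;> tauto
      · rintro (⟨_, h1⟩ | h1)
        · exact h1
        · exact fun hzF => hdisj'.le_bot ⟨h1, hzF⟩
    rw [hset, lintegral_union hE (by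
      refine Set.disjoint_left.mpr fun z hz hz' => ?_
      exact hz (Set.mem_union_left _ hz'))]
  -- the key identity
  have hkey : fracPerimeter N s E + fracPerimeter N s F'
      = fracPerimeter N s G
        + ((∫⁻ x in E, ∫⁻ y in F', K x y) + ∫⁻ x in F', ∫⁻ y in E, K x y) := by
    have h1 : fracPerimeter N s E
        = (∫⁻ x in E, ∫⁻ y in Gᶜ, K x y) + ∫⁻ x in E, ∫⁻ y in F', K x y := by
      unfold fracPerimeter
      rw [← lintegral_add_left hmeasG]
      exact lintegral_congr fun x => hinnE x
    have h2 : fracPerimeter N s F'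
        = (∫⁻ x in F', ∫⁻ y in Gᶜ, K x y) + ∫⁻ x in F', ∫⁻ y in E, K x y := by
      unfold fracPerimeter
      rw [← lintegral_add_left hmeasG]
      exact lintegral_congr fun x => hinnF x
    have h3 : fracPerimeter N s G
        = (∫⁻ x in E, ∫⁻ y in Gᶜ, K x y) + ∫⁻ x in F', ∫⁻ y in Gᶜ, K x y := by
      unfold fracPerimeter
      rw [hGdef, lintegral_union hF' hdisj']
    rw [h1, h2, h3]; ring
  -- positivity of the interaction term
  have hKpos : ∀ x y : EuclideanSpace ℝ (Fin N), x ≠ y → 0 < K x y := by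
    intro x y hxy
    refine ENNReal.ofReal_pos.mpr (Real.rpow_pos_of_pos ?_ _)
    simpa [sub_eq_zero] using hxy
  have hIpos : 0 < ∫⁻ x in E, ∫⁻ y in F', K x y := by
    have hinner : ∀ x, 0 < ∫⁻ y in F', K x y := by
      intro x
      rw [lintegral_pos_iff_support (by fun_prop)]
      have hsub : F' \ {x} ⊆ Function.support fun y => K x y := by
        intro y hy
        exact (hKpos x y (fun h => hy.2 (by simp [h]))).ne'
      calc 0 < volume F' := hF'pos
        _ = volume (F' \ {x}) := (measure_diff_null (measure_singleton x)).symm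
        _ ≤ (volume.restrict F') (Function.support fun y => K x y) := by
            rw [Measure.restrict_apply₀' hF'.nullMeasurableSet]
            exact measure_mono fun y hy => ⟨hsub hy, hy.1⟩
    rw [lintegral_pos_iff_support (by fun_prop)]
    have : Function.support (fun x => ∫⁻ y in F', K x y) = Set.univ :=
      Set.eq_univ_of_forall fun x => (hinner x).ne'
    rw [this, Measure.restrict_apply₀' hE.nullMeasurableSet, Set.univ_inter]
    exact hEpos
  -- conclude
  have htot : fracPerimeter N s E + fracPerimeter N s F' ≠ ⊤ :=
    (ENNReal.add_lt_top.mpr ⟨hEfin, hF'fin⟩).ne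
  have hGfin : fracPerimeter N s G ≠ ⊤ := by
    intro h
    rw [hkey, h] at htot
    exact htot (by simp)
  calc fracPerimeter N s G
      < fracPerimeter N s G
        + ((∫⁻ x in E, ∫⁻ y in F', K x y) + ∫⁻ x in F', ∫⁻ y in E, K x y) := by
        refine ENNReal.lt_add_right hGfin ?_
        exact fun h => hIpos.ne' (by simpa using (add_eq_zero.mp h).1)
    _ = fracPerimeter N s E + fracPerimeter N s F' := hkey.symm
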